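/- Let P₁, P₂, τ₁, τ₂ > 0 satisfy τ₂·γ(P₁) ≤ τ₁·(γ(P₁+P₂) − γ(P₁)) (Case I). Then the union of the two sets D₁* = {(d₁, d₂) ∈ ℝ² : γ(P₁)·d₁ ≥ τ₁, d₁ ≤ d₂} and D₂* = {(d₁, d₂) ∈ ℝ² : γ(P₁)·d₁ ≥ τ₁, γ(P₂)·d₂ ≥ τ₂, d₂ ≤ d₁, γ(P₁)·d₁ + (γ(P₁+P₂) − γ(P₁))·d₂ ≥ τ₁ + τ₂} is equal to the set {(d₁, d₂) ∈ ℝ² : γ(P₁)·d₁ ≥ τ₁, γ(P₂)·d₂ ≥ τ₂, γ(P₁)·d₁ + (γ(P₁+P₂) − γ(P₁))·d₂ ≥ τ₁ + τ₂}. -/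

import Mathlib

/-- γ(x) = (1/2)·log₂(1+x). -/
noncomputable def gam (x : ℝ) : ℝ := (1/2) * Real.logb 2 (1 + x)

lemma gam_pos {x : ℝ} (hx : 0 < x) : 0 < gam x := by
  have : 0 < Real.logb 2 (1 + x) := Real.logb_pos (by norm_num) (by linarith)
  unfold gam; linarith

lemma gam_delta_pos {P₁ P₂ : ℝ} (hP₁ : 0 < P₁) (hP₂ : 0 < P₂) :
    0 < gam (P₁ + P₂) - gam P₁ := by
  have : Real.logb 2 (1 + P₁) < Real.logb 2 (1 + (P₁ + P₂)) :=
    Real.logb_lt_logb (by norm_num) (by linarith) (by linarith)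
  unfold gam; linarith

lemma gam_subadd {P₁ P₂ : ℝ} (hP₁ : 0 < P₁) (hP₂ : 0 < P₂) :
    gam (P₁ + P₂) - gam P₁ ≤ gam P₂ := by
  have h1 : Real.logb 2 (1 + (P₁ + P₂)) ≤ Real.logb 2 ((1 + P₁) * (1 + P₂)) :=
    Real.logb_le_logb_of_le (by norm_num) (by nlinarith) (by nlinarith)
  have h2 : Real.logb 2 ((1 + P₁) * (1 + P₂)) =
      Real.logb 2 (1 + P₁) + Real.logb 2 (1 + P₂) :=
    Real.logb_mul (by positivity) (by positivity)
  unfold gam; linarith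

theorem stmt_10 (P₁ P₂ τ₁ τ₂ : ℝ) (hP₁ : 0 < P₁) (hP₂ : 0 < P₂)
    (hτ₁ : 0 < τ₁) (hτ₂ : 0 < τ₂)
    (hcase : τ₂ * gam P₁ ≤ τ₁ * (gam (P₁ + P₂) - gam P₁)) :
    ({d : ℝ × ℝ | gam P₁ * d.1 ≥ τ₁ ∧ d.1 ≤ d.2} ∪
     {d : ℝ × ℝ | gam P₁ * d.1 ≥ τ₁ ∧ gam P₂ * d.2 ≥ τ₂ ∧ d.2 ≤ d.1 ∧
        gam P₁ * d.1 + (gam (P₁ + P₂) - gam P₁) * d.2 ≥ τ₁ + τ₂}) =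
    {d : ℝ × ℝ | gam P₁ * d.1 ≥ τ₁ ∧ gam P₂ * d.2 ≥ τ₂ ∧
        gam P₁ * d.1 + (gam (P₁ + P₂) - gam P₁) * d.2 ≥ τ₁ + τ₂} := by
  have hg1 : 0 < gam P₁ := gam_pos hP₁
  have hg2 : 0 < gam P₂ := gam_pos hP₂
  have hΔ : 0 < gam (P₁ + P₂) - gam P₁ := gam_delta_pos hP₁ hP₂
  have hsub : gam (P₁ + P₂) - gam P₁ ≤ gam P₂ := gam_subadd hP₁ hP₂
  ext d
  constructor
  · rintro (⟨h1, h2⟩ | ⟨h1, h2, _, h4⟩)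
    · -- from D₁*
      have hd1 : τ₁ / gam P₁ ≤ d.1 := by
        rw [div_le_iff₀ hg1]; linarith [mul_comm (gam P₁) d.1]
      have hd2 : τ₂ / (gam (P₁ + P₂) - gam P₁) ≤ d.2 := by
        have : τ₂ / (gam (P₁ + P₂) - gam P₁) ≤ τ₁ / gam P₁ := by
          rw [div_le_div_iff₀ hΔ hg1]; linarith
        linarith
      have hΔd2 : τ₂ ≤ (gam (P₁ + P₂) - gam P₁) * d.2 := by
        rw [← div_le_iff₀' hΔ]; exact hd2
      refine ⟨h1, ?_, by linarith⟩
      have : τ₂ ≤ gam P₂ * d.2 := by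
        have hd2' : 0 ≤ d.2 := le_trans (by positivity) hd2
        nlinarith
      exact this
    · exact ⟨h1, h2, h4⟩
  · rintro ⟨h1, h2, h3⟩
    rcases le_total d.1 d.2 with h | h
    · exact Or.inl ⟨h1, h⟩
    · exact Or.inr ⟨h1, h2, h, h3⟩
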